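/- For n ≥ 0, T_n^{(r,k)}(x|λ) = Σ_{j=0}^{n} [Σ_{m=0}^{n-j} (-1)^{n-m-j}/(m+1)^k · C(n,j) · m! · S₂(n-j,m)] H_j^{(r)}(x|λ), where S₂ denotes Stirling numbers of the second kind. -/

import Mathlib

open PowerSeries Finset

/-- e^{xt} as a formal power series. -/
noncomputable def expX (x : ℂ) : PowerSeries ℂ := rescale x (exp ℂ)

/-- 1 - e^{-t} as a formal power series. -/
noncomputable def oneSubExpNeg : PowerSeries ℂ := 1 - rescale (-1) (exp ℂ)

/-- Li_k(1-e^{-t}) = Σ_{m≥1} (1-e^{-t})^m / m^k as a formal power series. -/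
noncomputable def polyLogC (k : ℤ) : PowerSeries ℂ :=
  mk fun n => ∑ m ∈ Finset.Icc 1 n, (coeff n (oneSubExpNeg ^ m)) * ((m : ℂ) ^ k)⁻¹

/-- integer power of a power series (inverse via `PowerSeries.inv`). -/
noncomputable def zpowS (f : PowerSeries ℂ) (r : ℤ) : PowerSeries ℂ :=
  f ^ r.toNat * (f⁻¹) ^ (-r).toNat

/-- (1-λ)/(e^t-λ). -/
noncomputable def feBase (l : ℂ) : PowerSeries ℂ :=
  C (1 - l) * (exp ℂ - C l)⁻¹

/-- exponential generating function Σ f(n) t^n/n!. -/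
noncomputable def GF (f : ℕ → ℂ) : PowerSeries ℂ := mk fun n => f n / n.factorial

/-- Stirling numbers of the second kind: (e^t-1)^m = m! Σ_l S2(l,m) t^l/l!. -/
noncomputable def S2 (n m : ℕ) : ℂ :=
  (n.factorial : ℂ) / (m.factorial : ℂ) * coeff n ((exp ℂ - 1) ^ m)

lemma oneSubExpNeg_eq : oneSubExpNeg = -(rescale (-1) (exp ℂ - 1)) := by
  rw [oneSubExpNeg, map_sub, map_one]; ring

lemma constC_oneSubExpNeg : constantCoeff oneSubExpNeg = 0 := by
  simp [oneSubExpNeg, ← coeff_zero_eq_constantCoeff, coeff_rescale, coeff_exp]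

lemma coeff_pow_lt (f : PowerSeries ℂ) (hf : constantCoeff f = 0) :
    ∀ m n : ℕ, n < m → coeff n (f ^ m) = 0 := by
  intro m
  induction m with
  | zero => intro n h; omega
  | succ m ih =>
    intro n h
    rw [pow_succ', coeff_mul]
    apply Finset.sum_eq_zero
    rintro ⟨i, j⟩ hij
    rw [Finset.HasAntidiagonal.mem_antidiagonal] at hij
    rcases Nat.eq_zero_or_pos i with hi | hi
    · subst hi; rw [coeff_zero_eq_constantCoeff, hf, zero_mul]
    · rw [ih j (by omega), mul_zero]

lemma coeff_oneSubExpNeg_pow (n m : ℕ) :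
    coeff n (oneSubExpNeg ^ m)
      = (-1 : ℂ) ^ (n + m) * (m.factorial : ℂ) * S2 n m / n.factorial := by
  have h : oneSubExpNeg ^ m = C ((-1) ^ m) * rescale (-1) ((exp ℂ - 1) ^ m) := by
    rw [oneSubExpNeg_eq, neg_pow, map_pow, ← map_pow, map_neg, map_one]
  rw [h, coeff_C_mul, coeff_rescale, S2, pow_add]
  have h1 : (n.factorial : ℂ) ≠ 0 := Nat.cast_ne_zero.2 n.factorial_ne_zero
  have h2 : (m.factorial : ℂ) ≠ 0 := Nat.cast_ne_zero.2 m.factorial_ne_zero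
  field_simp

/-- The coefficient sequence of Li_k(1-e^{-t})/(1-e^{-t}) as an EGF. -/
noncomputable def A (k : ℤ) (p : ℕ) : ℂ :=
  ∑ m ∈ range (p + 1),
    (-1 : ℂ) ^ (p - m) * (((m : ℂ) + 1) ^ k)⁻¹ * (m.factorial : ℂ) * S2 p m

lemma coeff_GF_A (k : ℤ) (j : ℕ) :
    coeff j (GF (A k))
      = ∑ m ∈ range (j + 1), coeff j (oneSubExpNeg ^ m) * (((m : ℂ) + 1) ^ k)⁻¹ := by
  have h1 : (j.factorial : ℂ) ≠ 0 := Nat.cast_ne_zero.2 j.factorial_ne_zero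
  rw [GF, coeff_mk, A, Finset.sum_div]
  apply Finset.sum_congr rfl
  intro m hm
  rw [Finset.mem_range] at hm
  rw [coeff_oneSubExpNeg_pow]
  have hpar : (-1 : ℂ) ^ (j - m) = (-1 : ℂ) ^ (j + m) := by
    have h : j + m = (j - m) + 2 * m := by omega
    rw [h, pow_add, pow_mul]
    norm_num
  rw [hpar]
  field_simp

lemma polyLog_eq (k : ℤ) : polyLogC k = oneSubExpNeg * GF (A k) := by
  ext n
  rw [coeff_mul]
  have hrw : ∀ p ∈ antidiagonal n,
      coeff p.1 oneSubExpNeg * coeff p.2 (GF (A k))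
        = ∑ m ∈ range (n + 1),
            coeff p.1 oneSubExpNeg * coeff p.2 (oneSubExpNeg ^ m) * (((m : ℂ) + 1) ^ k)⁻¹ := by
    rintro ⟨i, j⟩ hij
    rw [Finset.HasAntidiagonal.mem_antidiagonal] at hij
    rw [coeff_GF_A]
    rw [Finset.mul_sum]
    rw [← Finset.sum_subset (Finset.range_subset_range.2 (by omega : j + 1 ≤ n + 1))]
    · apply Finset.sum_congr rfl; intro m _; ring
    · intro m _ hm
      rw [Finset.mem_range, not_lt] at hm
      rw [coeff_pow_lt _ constC_oneSubExpNeg m j (by omega), mul_zero, zero_mul]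
  rw [Finset.sum_congr rfl hrw, Finset.sum_comm]
  have h2 : ∀ m ∈ range (n + 1),
      (∑ p ∈ antidiagonal n,
        coeff p.1 oneSubExpNeg * coeff p.2 (oneSubExpNeg ^ m) * (((m : ℂ) + 1) ^ k)⁻¹)
      = coeff n (oneSubExpNeg ^ (m + 1)) * (((m : ℂ) + 1) ^ k)⁻¹ := by
    intro m _
    rw [pow_succ', coeff_mul, Finset.sum_mul]
  rw [Finset.sum_congr rfl h2]
  rw [polyLogC, coeff_mk]
  have h3 : Finset.Icc 1 n = Finset.Ico 1 (n + 1) := rfl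
  rw [h3]
  rw [Finset.sum_Ico_eq_sum_range]
  have h4 : n + 1 - 1 = n := rfl
  rw [h4]
  rw [Finset.sum_range_succ]
  rw [coeff_pow_lt _ constC_oneSubExpNeg (n + 1) n (by omega), zero_mul, add_zero]
  apply Finset.sum_congr rfl
  intro m hm
  push_cast
  ring_nf

lemma GF_mul (a h : ℕ → ℂ) :
    GF a * GF h = GF (fun n => ∑ j ∈ range (n + 1), (n.choose j : ℂ) * a (n - j) * h j) := by
  ext n
  rw [coeff_mul, GF, GF, GF]
  simp only [coeff_mk]
  rw [Finset.Nat.sum_antidiagonal_eq_sum_range_succ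
    (fun i j => a i / i.factorial * (h j / j.factorial))]
  rw [← Finset.sum_range_reflect, Finset.sum_div]
  apply Finset.sum_congr rfl
  intro j hj
  rw [Finset.mem_range] at hj
  have hjn : j ≤ n := by omega
  have e1 : n - (n - j) = j := by omega
  simp only [Nat.succ_sub_one]
  rw [e1]
  rw [Nat.cast_choose ℂ hjn]
  have h1 : (n.factorial : ℂ) ≠ 0 := Nat.cast_ne_zero.2 n.factorial_ne_zero
  have h2 : (j.factorial : ℂ) ≠ 0 := Nat.cast_ne_zero.2 j.factorial_ne_zero
  have h3 : ((n - j).factorial : ℂ) ≠ 0 := Nat.cast_ne_zero.2 (n - j).factorial_ne_zero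
  field_simp

lemma oneSubExpNeg_ne_zero : oneSubExpNeg ≠ 0 := by
  intro h
  have := congrArg (coeff 1) h
  simp [oneSubExpNeg, coeff_rescale, coeff_exp] at this

theorem stmt4 (lam : ℂ) (hlam : lam ≠ 1) (r k : ℤ) (T H : ℕ → ℂ → ℂ)
    (hT : ∀ x : ℂ, oneSubExpNeg * GF (fun n => T n x)
        = zpowS (feBase lam) (r) * polyLogC (k) * expX x)
    (hH : ∀ x : ℂ, GF (fun n => H n x) = zpowS (feBase lam) r * expX x) :
    ∀ (n : ℕ) (x : ℂ),
      T n x = ∑ j ∈ range (n + 1),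
        (∑ m ∈ range (n - j + 1), (-1 : ℂ) ^ (n - m - j) * (((m : ℂ) + 1) ^ k)⁻¹ *
          (n.choose j : ℂ) * (m.factorial : ℂ) * S2 (n - j) m) * H j x := by
  intro n x
  have key : GF (fun n => T n x) = GF (A k) * GF (fun n => H n x) := by
    apply mul_left_cancel₀ oneSubExpNeg_ne_zero
    rw [hT x, polyLog_eq k, hH x]
    ring
  rw [GF_mul] at key
  have hc := congrArg (coeff n) key
  simp only [GF, coeff_mk] at hc
  have h1 : (n.factorial : ℂ) ≠ 0 := Nat.cast_ne_zero.2 n.factorial_ne_zero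
  have hTn : T n x
      = ∑ j ∈ range (n + 1), (n.choose j : ℂ) * A k (n - j) * H j x := by
    field_simp at hc
    exact hc
  rw [hTn]
  apply Finset.sum_congr rfl
  intro j hj
  rw [A, Finset.mul_sum, Finset.sum_mul, Finset.sum_mul]
  apply Finset.sum_congr rfl
  intro m hm
  have e : n - m - j = n - j - m := by omega
  rw [e]
  ring
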